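/- arXiv:1209.4414 — 3 statements merged into one kernel-verified Lean document; each statement's English description precedes it below -/
import Mathlib

section
/- Let R = F_2[u]/(u^4 - 1) and let f ∈ R[x] be a basic irreducible polynomial, i.e., a polynomial whose image f̄ under the reduction map R[x] → F_2[x] sending u to 1 is irreducible. Then f is primary: whenever g·h lies in the ideal (f) and h ∉ (f), some power of g lies in (f). -/
noncomputable def R := AdjoinRoot (Polynomial.X ^ 4 - 1 : Polynomial (ZMod 2))

noncomputable instance : CommRing R := AdjoinRoot.instCommRing _

noncomputable def uu : R := AdjoinRoot.root _

/-- Reduction modulo the maximal ideal, sending u to 1. -/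
noncomputable def rho : R →+* ZMod 2 :=
  AdjoinRoot.lift (RingHom.id (ZMod 2)) 1 (by simp)

open Polynomial

lemma rho_surjective : Function.Surjective rho := by
  intro x
  refine ⟨AdjoinRoot.of _ x, ?_⟩
  show (AdjoinRoot.lift (RingHom.id (ZMod 2)) 1 (by simp)) (AdjoinRoot.of _ x) = x
  rw [AdjoinRoot.lift_of]
  rfl

lemma nilp_of_rho_eq_zero (a : R) (h : rho a = 0) : a ^ 4 = 0 := by
  obtain ⟨p, rfl⟩ := AdjoinRoot.mk_surjective a
  have hev : p.eval 1 = 0 := by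
    have h2 : (AdjoinRoot.lift (RingHom.id (ZMod 2)) 1 (by simp))
        ((AdjoinRoot.mk (X ^ 4 - 1 : Polynomial (ZMod 2))) p) = 0 := h
    rw [AdjoinRoot.lift_mk] at h2
    simpa using h2
  have hdvd : (X - C 1) ∣ p := dvd_iff_isRoot.mpr hev
  obtain ⟨q, rfl⟩ := hdvd
  have hkey : ((X : Polynomial (ZMod 2)) - C 1) ^ 4 = X ^ 4 - 1 := by
    have h2 : ((X : Polynomial (ZMod 2)) - C 1) = X + 1 := by
      have : (C 1 : Polynomial (ZMod 2)) = 1 := map_one C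
      rw [this, sub_eq_add_neg]
      norm_num
      exact CharTwo.neg_eq 1
    rw [h2]
    have h4 := add_pow_char_pow (R := Polynomial (ZMod 2)) X 1 2 2
    norm_num at h4
    rw [h4, sub_eq_add_neg, CharTwo.neg_eq]
  have : (AdjoinRoot.mk (X ^ 4 - 1 : Polynomial (ZMod 2)) ((X - C 1) * q)) ^ 4 = 0 := by
    rw [← map_pow, AdjoinRoot.mk_eq_zero]
    exact ⟨q ^ 4, by rw [mul_pow, hkey]⟩
  exact this

lemma nilpotent_of_map_rho_eq_zero (p : Polynomial R) (h : p.map rho = 0) :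
    IsNilpotent p := by
  rw [Polynomial.isNilpotent_iff]
  intro i
  refine ⟨4, nilp_of_rho_eq_zero _ ?_⟩
  have := congrArg (fun q => Polynomial.coeff q i) h
  simpa [Polynomial.coeff_map] using this

theorem stmt5 (f : Polynomial R)
    (hbasic : Irreducible (f.map rho)) :
    ∀ g h : Polynomial R, g * h ∈ Ideal.span {f} → h ∉ Ideal.span {f} →
      ∃ k : ℕ, 0 < k ∧ g ^ k ∈ Ideal.span {f} := by
  intro g h hgh hh
  set F := f.map rho with hF
  have hmapsurj : Function.Surjective (Polynomial.map rho : Polynomial R → Polynomial (ZMod 2)) :=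
    Polynomial.map_surjective rho rho_surjective
  by_cases hdvd : F ∣ g.map rho
  · -- g maps to a multiple of F; g = q*f + nilpotent
    obtain ⟨qb, hqb⟩ := hdvd
    obtain ⟨q, hq⟩ := hmapsurj qb
    have he : (g - q * f).map rho = 0 := by
      rw [Polynomial.map_sub, Polynomial.map_mul, hq, ← hF, hqb, mul_comm, sub_self]
    obtain ⟨n, hn⟩ := nilpotent_of_map_rho_eq_zero _ he
    refine ⟨n + 1, Nat.succ_pos n, ?_⟩
    have hmem : g - (g - q * f) ∈ Ideal.span {f} := by
      have hsub : g - (g - q * f) = q * f := by ring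
      rw [hsub]; exact Ideal.mem_span_singleton.mpr ⟨q, mul_comm q f⟩
    have heq : Ideal.Quotient.mk (Ideal.span {f}) g
        = Ideal.Quotient.mk (Ideal.span {f}) (g - q * f) := Ideal.Quotient.eq.mpr hmem
    have hz : (g - q * f) ^ (n + 1) = 0 := by
      rw [pow_succ, hn, zero_mul]
    rw [← Ideal.Quotient.eq_zero_iff_mem, map_pow, heq, ← map_pow, hz, map_zero]
  · -- F coprime to g.map rho, derive h ∈ span {f}, contradiction
    exfalso
    have hcop : IsCoprime F (g.map rho) :=
      (EuclideanDomain.dvd_or_coprime F (g.map rho) hbasic).resolve_left hdvd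
    obtain ⟨ab, bb, hab⟩ := hcop
    obtain ⟨a, ha⟩ := hmapsurj ab
    obtain ⟨b, hb⟩ := hmapsurj bb
    have he : (a * f + b * g - 1).map rho = 0 := by
      rw [Polynomial.map_sub, Polynomial.map_add, Polynomial.map_mul, Polynomial.map_mul,
        ha, hb, ← hF, Polynomial.map_one, hab, sub_self]
    obtain hnil := nilpotent_of_map_rho_eq_zero _ he
    set I := Ideal.span ({f} : Set (Polynomial R))
    let φ := Ideal.Quotient.mk I
    have hnilφ : IsNilpotent (φ (a * f + b * g - 1)) := hnil.map φ
    have hunit : IsUnit (φ (a * f + b * g)) := by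
      have : φ (a * f + b * g) = 1 + φ (a * f + b * g - 1) := by
        rw [← map_one φ, ← map_add]; ring_nf
      rw [this]
      exact hnilφ.isUnit_one_add
    have hmem : (a * f + b * g) * h ∈ I := by
      have h1 : a * f * h ∈ I := by
        exact Ideal.mul_mem_right _ _ (Ideal.mul_mem_left _ _
          (Ideal.mem_span_singleton.mpr dvd_rfl))
      have h2 : b * (g * h) ∈ I := Ideal.mul_mem_left _ _ hgh
      have : (a * f + b * g) * h = a * f * h + b * (g * h) := by ring
      rw [this]
      exact Ideal.add_mem _ h1 h2
    have : φ ((a * f + b * g) * h) = 0 := Ideal.Quotient.eq_zero_iff_mem.mpr hmem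
    rw [map_mul] at this
    have hφh : φ h = 0 := (IsUnit.mul_left_eq_zero hunit).mp (by rwa [mul_comm] at this)
    exact hh (Ideal.Quotient.eq_zero_iff_mem.mp hφh)
end

section
/- Let m be an odd positive integer such that 2^i ≡ −1 (mod m) for some positive integer i. Then every monic irreducible factor f of x^m − 1 over F_2 is self-reciprocal, i.e., f equals its reciprocal polynomial f* = x^{deg f}·f(1/x). -/
open Polynomial

theorem stmt10 (m : ℕ) (hm : 0 < m) (hodd : Odd m)
    (h : ∃ i : ℕ, 0 < i ∧ (2 : ZMod m) ^ i = -1) :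
    ∀ f : Polynomial (ZMod 2), f.Monic → Irreducible f →
      f ∣ Polynomial.X ^ m - 1 → f.reverse = f := by
  obtain ⟨i, hi, h2i⟩ := h
  intro f hf hirr hdvd
  haveI : NeZero m := ⟨hm.ne'⟩
  -- constant coefficient of f is 1
  have hf0 : f.coeff 0 = 1 := by
    have h1 : f.eval 0 ∣ (X ^ m - 1 : Polynomial (ZMod 2)).eval 0 := eval_dvd hdvd
    rw [eval_sub, eval_pow, eval_X, eval_one, zero_pow hm.ne'] at h1
    have h2 : f.coeff 0 ≠ 0 := by
      rw [coeff_zero_eq_eval_zero]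
      intro h0
      rw [h0, zero_dvd_iff] at h1
      simp at h1
    revert h2; generalize f.coeff 0 = c; revert c; decide
  -- work in K = AdjoinRoot f
  haveI : Fact (Irreducible f) := ⟨hirr⟩
  set K := AdjoinRoot f with hK
  set α : K := AdjoinRoot.root f with hα
  have haeval : Polynomial.aeval α f = 0 := by
    rw [AdjoinRoot.aeval_eq, AdjoinRoot.mk_self]
  -- α^m = 1
  have hαm : α ^ m = 1 := by
    obtain ⟨g, hg⟩ := hdvd
    have := congrArg (Polynomial.aeval α) hg
    rw [map_sub, map_pow, aeval_X, map_one, map_mul, haeval, zero_mul] at this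
    exact sub_eq_zero.mp this
  -- frobenius respects aeval
  haveI : CharP K 2 := charP_of_injective_algebraMap (algebraMap (ZMod 2) K).injective 2
  have hfrob : ∀ β : K, Polynomial.aeval β f = 0 → Polynomial.aeval (β ^ 2) f = 0 := by
    intro β hβ
    let φ : K →ₐ[ZMod 2] K := AlgHom.mk' (frobenius K 2) (by
      intro c x
      simp only [Algebra.smul_def, map_mul]
      congr 1
      rw [show frobenius K 2 (algebraMap (ZMod 2) K c) = (algebraMap (ZMod 2) K c) ^ 2 from rfl,
        ← map_pow, ZMod.pow_card])
    have := Polynomial.aeval_algHom_apply φ β f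
    rw [hβ, map_zero] at this
    simpa [φ, frobenius_def] using this
  -- α^(2^n) is a root for all n
  have hroots : ∀ n : ℕ, Polynomial.aeval (α ^ 2 ^ n) f = 0 := by
    intro n
    induction n with
    | zero => simpa using haeval
    | succ n ih =>
        have := hfrob _ ih
        rwa [← pow_mul, ← pow_succ] at this
  -- m ∣ 2^i + 1
  have hmdvd : m ∣ 2 ^ i + 1 := by
    have : ((2 ^ i + 1 : ℕ) : ZMod m) = 0 := by
      push_cast
      rw [h2i]
      ring
    exact (ZMod.natCast_eq_zero_iff _ _).mp this
  obtain ⟨k, hk⟩ := hmdvd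
  -- α^(2^i) * α = 1
  have hinv : α ^ 2 ^ i * α = 1 := by
    rw [← pow_succ, hk, pow_mul, hαm, one_pow]
  -- α is a root of f.reverse
  letI instInv : Invertible (α ^ 2 ^ i) := ⟨α, by rw [mul_comm]; exact hinv, hinv⟩
  have hrev : Polynomial.aeval α f.reverse = 0 := by
    have h3 := (Polynomial.eval₂_reverse_eq_zero_iff (algebraMap (ZMod 2) K) (α ^ 2 ^ i) f).mpr
      (by simpa [Polynomial.aeval_def] using hroots i)
    have h4 : (α ^ 2 ^ i)⁻¹ = α := inv_eq_of_mul_eq_one_right hinv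
    simpa [Polynomial.aeval_def, h4] using h3
  -- f is the minimal polynomial of α
  have hmin : f = minpoly (ZMod 2) α := minpoly.eq_of_irreducible_of_monic hirr haeval hf
  have hfdvd : f ∣ f.reverse := by
    have hd := minpoly.dvd (ZMod 2) α hrev
    rwa [← hmin] at hd
  -- f.reverse is monic of the same degree
  have hfne : f ≠ 0 := hf.ne_zero
  have htd : f.natTrailingDegree = 0 := by
    rw [Polynomial.natTrailingDegree_eq_zero]
    right
    rw [hf0]; exact one_ne_zero
  have hmon : f.reverse.Monic := by
    unfold Polynomial.Monic
    rw [Polynomial.reverse_leadingCoeff, Polynomial.trailingCoeff, htd, hf0]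
  have hdeg : f.reverse.natDegree ≤ f.natDegree := Polynomial.reverse_natDegree_le f
  exact Polynomial.eq_of_monic_of_dvd_of_natDegree_le hf hmon hfdvd hdeg
end

section
/- Let R = F_2[u]/(u^4 - 1) and n a positive integer. In the quotient ring R_n = R[x]/(x^n - 1), every ideal that is a product of ideals of the form (g, (u+1)^t) with g ∈ F_2[x] dividing x^n - 1 and 0 ≤ t ≤ 4 can be generated by elements f_0, (u+1)f_1, (u+1)^2 f_2, (u+1)^3 f_3 with f_3 | f_2 | f_1 | f_0 | x^n - 1 in F_2[x]. -/
noncomputable instance : Algebra (ZMod 2) R :=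
  inferInstanceAs (Algebra (ZMod 2) (AdjoinRoot _))

/-- The quotient ring R_n = R[x]/(x^n - 1). -/
noncomputable def Rn (n : ℕ) := AdjoinRoot (Polynomial.X ^ n - 1 : Polynomial R)

noncomputable instance (n : ℕ) : CommRing (Rn n) := AdjoinRoot.instCommRing _

noncomputable instance (n : ℕ) : Algebra R (Rn n) :=
  inferInstanceAs (Algebra R (AdjoinRoot _))

/-- The natural map F_2[x] → R_n. -/
noncomputable def iota (n : ℕ) : Polynomial (ZMod 2) →+* Rn n :=
  (AdjoinRoot.mk _).comp (Polynomial.mapRingHom (algebraMap (ZMod 2) R))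

/-- The image of u + 1 in R_n. -/
noncomputable def w (n : ℕ) : Rn n := algebraMap R (Rn n) (uu + 1)

lemma two_eq_zero : (2 : R) = 0 := by
  have h2 : algebraMap (ZMod 2) R 2 = 0 := by
    have : (2 : ZMod 2) = 0 := rfl
    rw [this, map_zero]
  rw [← map_ofNat (algebraMap (ZMod 2) R) 2, h2]

lemma uu_pow_four : uu ^ 4 = 1 := by
  have h : (AdjoinRoot.mk (Polynomial.X ^ 4 - 1 : Polynomial (ZMod 2))) (Polynomial.X ^ 4 - 1) = 0 :=
    AdjoinRoot.mk_self
  rw [map_sub, map_pow, map_one, sub_eq_zero] at h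
  exact h

lemma w_pow_four (n : ℕ) : (w n) ^ 4 = 0 := by
  have h : (uu + 1 : R) ^ 4 = 0 := by
    linear_combination uu_pow_four + (2*uu^3+3*uu^2+2*uu+1)*two_eq_zero
  rw [w, ← map_pow, h, map_zero]

lemma iota_xn (n : ℕ) : iota n (Polynomial.X ^ n - 1) = 0 := by
  show (AdjoinRoot.mk _) (Polynomial.map (algebraMap (ZMod 2) R) (Polynomial.X ^ n - 1)) = 0
  rw [Polynomial.map_sub, Polynomial.map_pow, Polynomial.map_X, Polynomial.map_one]
  exact AdjoinRoot.mk_self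

lemma span4_mul {S : Type*} [CommRing S] (a b c0 c1 c2 c3 : S) :
    Ideal.span {a, b} * Ideal.span {c0, c1, c2, c3} =
      Ideal.span {a*c0, a*c1, a*c2, a*c3} ⊔ Ideal.span {b*c0, b*c1, b*c2, b*c3} := by
  simp only [Ideal.span_insert, Ideal.sup_mul, Ideal.mul_sup,
    Ideal.span_singleton_mul_span_singleton]
  ac_rfl

lemma dvd_mem_span {S : Type*} [CommRing S] {s : Set S} {x y : S} (hy : y ∈ s) (h : y ∣ x) :
    x ∈ Ideal.span s := by
  obtain ⟨c, rfl⟩ := h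
  exact Ideal.mul_mem_right c _ (Ideal.subset_span hy)


lemma merge (n : ℕ) (a0 a1 a2 a3 b0 b1 b2 b3 : Polynomial (ZMod 2)) :
    Ideal.span {iota n a0, w n * iota n a1, w n ^ 2 * iota n a2, w n ^ 3 * iota n a3} ⊔
      Ideal.span {iota n b0, w n * iota n b1, w n ^ 2 * iota n b2, w n ^ 3 * iota n b3} =
    Ideal.span {iota n (EuclideanDomain.gcd a0 b0), w n * iota n (EuclideanDomain.gcd a1 b1),
      w n ^ 2 * iota n (EuclideanDomain.gcd a2 b2), w n ^ 3 * iota n (EuclideanDomain.gcd a3 b3)} := by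
  apply le_antisymm
  · apply sup_le <;> rw [Ideal.span_le] <;> intro x hx <;>
      simp only [Set.mem_insert_iff, Set.mem_singleton_iff] at hx <;>
      rcases hx with rfl | rfl | rfl | rfl
    · exact dvd_mem_span (by left; rfl) (map_dvd (iota n) (EuclideanDomain.gcd_dvd_left a0 b0))
    · exact dvd_mem_span (by right; left; rfl)
        (mul_dvd_mul_left _ (map_dvd (iota n) (EuclideanDomain.gcd_dvd_left a1 b1)))
    · exact dvd_mem_span (by right; right; left; rfl)
        (mul_dvd_mul_left _ (map_dvd (iota n) (EuclideanDomain.gcd_dvd_left a2 b2)))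
    · exact dvd_mem_span (by right; right; right; rfl)
        (mul_dvd_mul_left _ (map_dvd (iota n) (EuclideanDomain.gcd_dvd_left a3 b3)))
    · exact dvd_mem_span (by left; rfl) (map_dvd (iota n) (EuclideanDomain.gcd_dvd_right a0 b0))
    · exact dvd_mem_span (by right; left; rfl)
        (mul_dvd_mul_left _ (map_dvd (iota n) (EuclideanDomain.gcd_dvd_right a1 b1)))
    · exact dvd_mem_span (by right; right; left; rfl)
        (mul_dvd_mul_left _ (map_dvd (iota n) (EuclideanDomain.gcd_dvd_right a2 b2)))
    · exact dvd_mem_span (by right; right; right; rfl)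
        (mul_dvd_mul_left _ (map_dvd (iota n) (EuclideanDomain.gcd_dvd_right a3 b3)))
  · rw [Ideal.span_le]
    intro x hx
    simp only [Set.mem_insert_iff, Set.mem_singleton_iff] at hx
    have key : ∀ (a b : Polynomial (ZMod 2)) (z : Rn n),
        z * iota n a ∈ Ideal.span ({iota n a0, w n * iota n a1, w n ^ 2 * iota n a2,
          w n ^ 3 * iota n a3} : Set (Rn n)) ⊔
          Ideal.span {iota n b0, w n * iota n b1, w n ^ 2 * iota n b2, w n ^ 3 * iota n b3} →
        z * iota n b ∈ Ideal.span ({iota n a0, w n * iota n a1, w n ^ 2 * iota n a2,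
          w n ^ 3 * iota n a3} : Set (Rn n)) ⊔
          Ideal.span {iota n b0, w n * iota n b1, w n ^ 2 * iota n b2, w n ^ 3 * iota n b3} →
        z * iota n (EuclideanDomain.gcd a b) ∈ Ideal.span ({iota n a0, w n * iota n a1, w n ^ 2 * iota n a2,
          w n ^ 3 * iota n a3} : Set (Rn n)) ⊔
          Ideal.span {iota n b0, w n * iota n b1, w n ^ 2 * iota n b2, w n ^ 3 * iota n b3} := by
      intro a b z ha hb
      have hg : EuclideanDomain.gcd a b = a * EuclideanDomain.gcdA a b + b * EuclideanDomain.gcdB a b := EuclideanDomain.gcd_eq_gcd_ab a b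
      have : z * iota n (EuclideanDomain.gcd a b) =
          iota n (EuclideanDomain.gcdA a b) * (z * iota n a) + iota n (EuclideanDomain.gcdB a b) * (z * iota n b) := by
        rw [hg, map_add, map_mul, map_mul]; ring
      rw [this]
      exact Ideal.add_mem _ (Ideal.mul_mem_left _ _ ha) (Ideal.mul_mem_left _ _ hb)
    rcases hx with rfl | rfl | rfl | rfl
    · have := key a0 b0 1
      simpa using this
        (Ideal.mem_sup_left (Ideal.subset_span (by simp)))
        (Ideal.mem_sup_right (Ideal.subset_span (by simp)))
    · exact key a1 b1 (w n)
        (Ideal.mem_sup_left (Ideal.subset_span (by right; left; rfl)))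
        (Ideal.mem_sup_right (Ideal.subset_span (by right; left; rfl)))
    · exact key a2 b2 (w n ^ 2)
        (Ideal.mem_sup_left (Ideal.subset_span (by right; right; left; rfl)))
        (Ideal.mem_sup_right (Ideal.subset_span (by right; right; left; rfl)))
    · exact key a3 b3 (w n ^ 3)
        (Ideal.mem_sup_left (Ideal.subset_span (by right; right; right; rfl)))
        (Ideal.mem_sup_right (Ideal.subset_span (by right; right; right; rfl)))

lemma wz (n : ℕ) (j k : ℕ) (h : j = 4 + k) (x : Rn n) : w n ^ j * x = 0 := by
  subst h
  rw [pow_add, w_pow_four, zero_mul, zero_mul]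

open Polynomial in
lemma step (n : ℕ) (g f0 f1 f2 f3 : Polynomial (ZMod 2)) (t : ℕ)
    (h32 : f3 ∣ f2) (h21 : f2 ∣ f1) (h10 : f1 ∣ f0) (h0 : f0 ∣ X ^ n - 1) :
    ∃ F0 F1 F2 F3 : Polynomial (ZMod 2),
      F3 ∣ F2 ∧ F2 ∣ F1 ∧ F1 ∣ F0 ∧ F0 ∣ X ^ n - 1 ∧
      Ideal.span {iota n g, (w n) ^ t} *
        Ideal.span {iota n f0, w n * iota n f1, (w n) ^ 2 * iota n f2, (w n) ^ 3 * iota n f3} =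
      Ideal.span {iota n F0, w n * iota n F1, (w n) ^ 2 * iota n F2, (w n) ^ 3 * iota n F3} := by
  have hmul : Ideal.span ({iota n g * iota n f0, iota n g * (w n * iota n f1),
      iota n g * (w n ^ 2 * iota n f2), iota n g * (w n ^ 3 * iota n f3)} : Set (Rn n)) =
      Ideal.span {iota n (g*f0), w n * iota n (g*f1),
        w n ^ 2 * iota n (g*f2), w n ^ 3 * iota n (g*f3)} := by
    rw [show iota n g * iota n f0 = iota n (g*f0) from (map_mul _ _ _).symm,
      show iota n g * (w n * iota n f1) = w n * iota n (g*f1) by rw [map_mul]; ring,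
      show iota n g * (w n ^ 2 * iota n f2) = w n ^ 2 * iota n (g*f2) by rw [map_mul]; ring,
      show iota n g * (w n ^ 3 * iota n f3) = w n ^ 3 * iota n (g*f3) by rw [map_mul]; ring]
  have hz0 : iota n (X ^ n - 1) = 0 := iota_xn n
  have hz1 : w n * iota n (X ^ n - 1) = 0 := by rw [hz0, mul_zero]
  have hz2 : w n ^ 2 * iota n (X ^ n - 1) = 0 := by rw [hz0, mul_zero]
  have hz3 : w n ^ 3 * iota n (X ^ n - 1) = 0 := by rw [hz0, mul_zero]
  obtain _|(_|(_|(_|t))) := t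
  · -- t = 0
    refine ⟨EuclideanDomain.gcd (g*f0) f0, EuclideanDomain.gcd (g*f1) f1,
      EuclideanDomain.gcd (g*f2) f2, EuclideanDomain.gcd (g*f3) f3,
      EuclideanDomain.dvd_gcd ((EuclideanDomain.gcd_dvd_left _ _).trans (mul_dvd_mul_left g h32))
        ((EuclideanDomain.gcd_dvd_right _ _).trans h32),
      EuclideanDomain.dvd_gcd ((EuclideanDomain.gcd_dvd_left _ _).trans (mul_dvd_mul_left g h21))
        ((EuclideanDomain.gcd_dvd_right _ _).trans h21),
      EuclideanDomain.dvd_gcd ((EuclideanDomain.gcd_dvd_left _ _).trans (mul_dvd_mul_left g h10))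
        ((EuclideanDomain.gcd_dvd_right _ _).trans h10),
      (EuclideanDomain.gcd_dvd_right _ _).trans h0, ?_⟩
    rw [span4_mul, hmul]
    simp only [pow_zero, one_mul]
    exact merge n (g*f0) (g*f1) (g*f2) (g*f3) f0 f1 f2 f3
  · -- t = 1
    refine ⟨EuclideanDomain.gcd (g*f0) (X^n-1), EuclideanDomain.gcd (g*f1) f0,
      EuclideanDomain.gcd (g*f2) f1, EuclideanDomain.gcd (g*f3) f2,
      EuclideanDomain.dvd_gcd ((EuclideanDomain.gcd_dvd_left _ _).trans (mul_dvd_mul_left g h32))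
        ((EuclideanDomain.gcd_dvd_right _ _).trans h21),
      EuclideanDomain.dvd_gcd ((EuclideanDomain.gcd_dvd_left _ _).trans (mul_dvd_mul_left g h21))
        ((EuclideanDomain.gcd_dvd_right _ _).trans h10),
      EuclideanDomain.dvd_gcd ((EuclideanDomain.gcd_dvd_left _ _).trans (mul_dvd_mul_left g h10))
        ((EuclideanDomain.gcd_dvd_right _ _).trans h0),
      EuclideanDomain.gcd_dvd_right _ _, ?_⟩
    rw [span4_mul, hmul]
    have hsec : Ideal.span ({w n ^ 1 * iota n f0, w n ^ 1 * (w n * iota n f1),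
        w n ^ 1 * (w n ^ 2 * iota n f2), w n ^ 1 * (w n ^ 3 * iota n f3)} : Set (Rn n)) =
        Ideal.span {iota n (X^n-1), w n * iota n f0, w n ^ 2 * iota n f1, w n ^ 3 * iota n f2} := by
      rw [show w n ^ 1 * iota n f0 = w n * iota n f0 by ring,
        show w n ^ 1 * (w n * iota n f1) = w n ^ 2 * iota n f1 by ring,
        show w n ^ 1 * (w n ^ 2 * iota n f2) = w n ^ 3 * iota n f2 by ring,
        show w n ^ 1 * (w n ^ 3 * iota n f3) = (0 : Rn n) by
          rw [show w n ^ 1 * (w n ^ 3 * iota n f3) = w n ^ 4 * iota n f3 by ring,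
            w_pow_four, zero_mul],
        hz0]
      congr 1
      ext x; simp only [Set.mem_insert_iff, Set.mem_singleton_iff]; tauto
    rw [hsec]
    exact merge n (g*f0) (g*f1) (g*f2) (g*f3) (X^n-1) f0 f1 f2
  · -- t = 2
    refine ⟨EuclideanDomain.gcd (g*f0) (X^n-1), EuclideanDomain.gcd (g*f1) (X^n-1),
      EuclideanDomain.gcd (g*f2) f0, EuclideanDomain.gcd (g*f3) f1,
      EuclideanDomain.dvd_gcd ((EuclideanDomain.gcd_dvd_left _ _).trans (mul_dvd_mul_left g h32))
        ((EuclideanDomain.gcd_dvd_right _ _).trans h10),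
      EuclideanDomain.dvd_gcd ((EuclideanDomain.gcd_dvd_left _ _).trans (mul_dvd_mul_left g h21))
        ((EuclideanDomain.gcd_dvd_right _ _).trans h0),
      EuclideanDomain.dvd_gcd ((EuclideanDomain.gcd_dvd_left _ _).trans (mul_dvd_mul_left g h10))
        (EuclideanDomain.gcd_dvd_right _ _),
      EuclideanDomain.gcd_dvd_right _ _, ?_⟩
    rw [span4_mul, hmul]
    have hsec : Ideal.span ({w n ^ 2 * iota n f0, w n ^ 2 * (w n * iota n f1),
        w n ^ 2 * (w n ^ 2 * iota n f2), w n ^ 2 * (w n ^ 3 * iota n f3)} : Set (Rn n)) =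
        Ideal.span {iota n (X^n-1), w n * iota n (X^n-1),
          w n ^ 2 * iota n f0, w n ^ 3 * iota n f1} := by
      rw [show w n ^ 2 * (w n * iota n f1) = w n ^ 3 * iota n f1 by ring,
        show w n ^ 2 * (w n ^ 2 * iota n f2) = (0 : Rn n) by
          rw [show w n ^ 2 * (w n ^ 2 * iota n f2) = w n ^ 4 * iota n f2 by ring,
            w_pow_four, zero_mul],
        show w n ^ 2 * (w n ^ 3 * iota n f3) = (0 : Rn n) by
          rw [show w n ^ 2 * (w n ^ 3 * iota n f3) = w n ^ 4 * (w n * iota n f3) by ring,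
            w_pow_four, zero_mul],
        hz1, hz0]
      congr 1
      ext x; simp only [Set.mem_insert_iff, Set.mem_singleton_iff]; tauto
    rw [hsec]
    exact merge n (g*f0) (g*f1) (g*f2) (g*f3) (X^n-1) (X^n-1) f0 f1
  · -- t = 3
    refine ⟨EuclideanDomain.gcd (g*f0) (X^n-1), EuclideanDomain.gcd (g*f1) (X^n-1),
      EuclideanDomain.gcd (g*f2) (X^n-1), EuclideanDomain.gcd (g*f3) f0,
      EuclideanDomain.dvd_gcd ((EuclideanDomain.gcd_dvd_left _ _).trans (mul_dvd_mul_left g h32))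
        ((EuclideanDomain.gcd_dvd_right _ _).trans h0),
      EuclideanDomain.dvd_gcd ((EuclideanDomain.gcd_dvd_left _ _).trans (mul_dvd_mul_left g h21))
        (EuclideanDomain.gcd_dvd_right _ _),
      EuclideanDomain.dvd_gcd ((EuclideanDomain.gcd_dvd_left _ _).trans (mul_dvd_mul_left g h10))
        (EuclideanDomain.gcd_dvd_right _ _),
      EuclideanDomain.gcd_dvd_right _ _, ?_⟩
    rw [span4_mul, hmul]
    have hsec : Ideal.span ({w n ^ 3 * iota n f0, w n ^ 3 * (w n * iota n f1),
        w n ^ 3 * (w n ^ 2 * iota n f2), w n ^ 3 * (w n ^ 3 * iota n f3)} : Set (Rn n)) =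
        Ideal.span {iota n (X^n-1), w n * iota n (X^n-1),
          w n ^ 2 * iota n (X^n-1), w n ^ 3 * iota n f0} := by
      rw [show w n ^ 3 * (w n * iota n f1) = (0 : Rn n) by
          rw [show w n ^ 3 * (w n * iota n f1) = w n ^ 4 * iota n f1 by ring,
            w_pow_four, zero_mul],
        show w n ^ 3 * (w n ^ 2 * iota n f2) = (0 : Rn n) by
          rw [show w n ^ 3 * (w n ^ 2 * iota n f2) = w n ^ 4 * (w n * iota n f2) by ring,
            w_pow_four, zero_mul],
        show w n ^ 3 * (w n ^ 3 * iota n f3) = (0 : Rn n) by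
          rw [show w n ^ 3 * (w n ^ 3 * iota n f3) = w n ^ 4 * (w n ^ 2 * iota n f3) by ring,
            w_pow_four, zero_mul],
        hz2, hz1, hz0]
      congr 1
      ext x; simp only [Set.mem_insert_iff, Set.mem_singleton_iff]; tauto
    rw [hsec]
    exact merge n (g*f0) (g*f1) (g*f2) (g*f3) (X^n-1) (X^n-1) (X^n-1) f0
  · -- t = t + 4
    refine ⟨EuclideanDomain.gcd (g*f0) (X^n-1), EuclideanDomain.gcd (g*f1) (X^n-1),
      EuclideanDomain.gcd (g*f2) (X^n-1), EuclideanDomain.gcd (g*f3) (X^n-1),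
      EuclideanDomain.dvd_gcd ((EuclideanDomain.gcd_dvd_left _ _).trans (mul_dvd_mul_left g h32))
        (EuclideanDomain.gcd_dvd_right _ _),
      EuclideanDomain.dvd_gcd ((EuclideanDomain.gcd_dvd_left _ _).trans (mul_dvd_mul_left g h21))
        (EuclideanDomain.gcd_dvd_right _ _),
      EuclideanDomain.dvd_gcd ((EuclideanDomain.gcd_dvd_left _ _).trans (mul_dvd_mul_left g h10))
        (EuclideanDomain.gcd_dvd_right _ _),
      EuclideanDomain.gcd_dvd_right _ _, ?_⟩
    rw [span4_mul, hmul]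
    have hsec : Ideal.span ({w n ^ (t+1+1+1+1) * iota n f0, w n ^ (t+1+1+1+1) * (w n * iota n f1),
        w n ^ (t+1+1+1+1) * (w n ^ 2 * iota n f2), w n ^ (t+1+1+1+1) * (w n ^ 3 * iota n f3)} : Set (Rn n)) =
        Ideal.span {iota n (X^n-1), w n * iota n (X^n-1),
          w n ^ 2 * iota n (X^n-1), w n ^ 3 * iota n (X^n-1)} := by
      rw [wz n _ t (by omega), wz n _ t (by omega), wz n _ t (by omega), wz n _ t (by omega),
        hz3, hz2, hz1, hz0]
    rw [hsec]
    exact merge n (g*f0) (g*f1) (g*f2) (g*f3) (X^n-1) (X^n-1) (X^n-1) (X^n-1)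

theorem stmt15 (n : ℕ) (hn : 0 < n)
    (L : List (Polynomial (ZMod 2) × ℕ))
    (hL : ∀ p ∈ L, p.1 ∣ Polynomial.X ^ n - 1 ∧ p.2 ≤ 4) :
    ∃ f0 f1 f2 f3 : Polynomial (ZMod 2),
      f3 ∣ f2 ∧ f2 ∣ f1 ∧ f1 ∣ f0 ∧ f0 ∣ Polynomial.X ^ n - 1 ∧
      (L.map fun p => Ideal.span {iota n p.1, (w n) ^ p.2}).prod =
        Ideal.span {iota n f0, w n * iota n f1,
          (w n) ^ 2 * iota n f2, (w n) ^ 3 * iota n f3} := by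
  clear hn hL
  induction L with
  | nil =>
    refine ⟨1, 1, 1, 1, dvd_refl 1, dvd_refl 1, dvd_refl 1, one_dvd _, ?_⟩
    rw [List.map_nil, List.prod_nil]
    symm
    rw [Ideal.one_eq_top, Ideal.eq_top_iff_one]
    exact Ideal.subset_span (by left; exact (map_one (iota n)).symm)
  | cons p L ih =>
    obtain ⟨f0, f1, f2, f3, h32, h21, h10, h0, heq⟩ := ih
    obtain ⟨F0, F1, F2, F3, H32, H21, H10, H0, Heq⟩ :=
      step n p.1 f0 f1 f2 f3 p.2 h32 h21 h10 h0
    refine ⟨F0, F1, F2, F3, H32, H21, H10, H0, ?_⟩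
    rw [List.map_cons, List.prod_cons, heq, Heq]
end
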